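/- The algebra NCSym is freely generated by the elements {p_A : A atomic}; that is, the p_A for atomic A are algebraically independent and generate NCSym. -/

import Mathlib

open scoped Classical
noncomputable section

/-- The ground set `[n] = {1, …, n}`. -/
def ground (n : ℕ) : Finset ℕ := Finset.Icc 1 n

/-- `A` is a set partition of `[n]`. -/
def IsSetPartition (n : ℕ) (A : Finset (Finset ℕ)) : Prop :=
  (∀ B ∈ A, B.Nonempty) ∧
  (∀ B ∈ A, ∀ C ∈ A, B ≠ C → Disjoint B C) ∧
  A.sup id = ground n

/-- Shift every entry of every part by `n`. -/
def shiftP (n : ℕ) (A : Finset (Finset ℕ)) : Finset (Finset ℕ) :=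
  A.image (fun B => B.image (· + n))

/-- Shifted concatenation `A|B` of a set partition `A ⊢ [n]` with `B`. -/
def concatP (n : ℕ) (A B : Finset (Finset ℕ)) : Finset (Finset ℕ) :=
  A ∪ shiftP n B

/-- `A` is an atomic set partition of `[n]`: nonempty and not a nontrivial
shifted concatenation. -/
def AtomicP (n : ℕ) (A : Finset (Finset ℕ)) : Prop :=
  IsSetPartition n A ∧ 0 < n ∧
  ¬ ∃ k B C, 0 < k ∧ k < n ∧ IsSetPartition k B ∧ IsSetPartition (n - k) C ∧
      A = concatP k B C

/-- Shifted concatenation of a list of (size, set partition) pairs. -/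
def concatListP : List (ℕ × Finset (Finset ℕ)) → ℕ × Finset (Finset ℕ)
  | [] => (0, ∅)
  | p :: L => ((concatListP L).1 + p.1, concatP p.1 p.2 (concatListP L).2)

/-- `L` is the atomic factorization `A^!` of the set partition `A ⊢ [n]`. -/
def AtomicFactorization (n : ℕ) (A : Finset (Finset ℕ))
    (L : List (ℕ × Finset (Finset ℕ))) : Prop :=
  (∀ p ∈ L, AtomicP p.1 p.2) ∧ concatListP L = (n, A)

/-- The Bell number: the number of set partitions of `[n]`. -/
def bell (n : ℕ) : ℕ := Nat.card {A : Finset (Finset ℕ) // IsSetPartition n A}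

/-- Stirling numbers of the second kind: set partitions of `[n]` into `k` parts. -/
def stirling2 (n k : ℕ) : ℕ :=
  Nat.card {A : Finset (Finset ℕ) // IsSetPartition n A ∧ A.card = k}

/-- The number of atomic set partitions of `[n]` into `k` parts. -/
def atomCount (n k : ℕ) : ℕ :=
  Nat.card {A : Finset (Finset ℕ) // AtomicP n A ∧ A.card = k}

/-- The number of atomic set partitions of `[n]`. -/
def atomCount' (n : ℕ) : ℕ := Nat.card {A : Finset (Finset ℕ) // AtomicP n A}

/-- Refinement order: `A ≤ B` iff every part of `A` is contained in a part of `B`. -/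
def refines (A B : Finset (Finset ℕ)) : Prop := ∀ a ∈ A, ∃ b ∈ B, a ⊆ b

/-- The meet `A ∧ B` of two set partitions. -/
def meetP (A B : Finset (Finset ℕ)) : Finset (Finset ℕ) :=
  ((A ×ˢ B).image fun p => p.1 ∩ p.2).filter (·.Nonempty)

/-- The set partition `{[n]}` with a single part (empty if `n = 0`). -/
def onePartP (n : ℕ) : Finset (Finset ℕ) := if n = 0 then ∅ else {ground n}

/-- The finite set of set partitions of `[n]` satisfying a predicate `P`. -/
def SPs (n : ℕ) (P : Finset (Finset ℕ) → Prop) : Finset (Finset (Finset ℕ)) :=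
  (ground n).powerset.powerset.filter fun A => IsSetPartition n A ∧ P A

/-- Covering relation for `≤_*`: `B` covers `A` if `B` is obtained from `A` by merging two
parts `a, a'` with every element of `a` smaller than every element of `a'`. -/
def coverStar (A B : Finset (Finset ℕ)) : Prop :=
  ∃ a ∈ A, ∃ a' ∈ A, a ≠ a' ∧ (∀ x ∈ a, ∀ y ∈ a', x < y) ∧
    B = insert (a ∪ a') ((A.erase a).erase a')

/-- The order `≤_*` on set partitions. -/
def leStar : Finset (Finset ℕ) → Finset (Finset ℕ) → Prop :=
  Relation.ReflTransGen coverStar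

/-- Restriction `A↓_S` of a set partition to the entries in `S`. -/
def restrictP (A : Finset (Finset ℕ)) (S : Finset ℕ) : Finset (Finset ℕ) :=
  (A.image (· ∩ S)).filter (·.Nonempty)

/-- The standardization map of a finite set `S`: sends the `i`-th smallest element of `S`
to `i` (1-indexed). -/
def stMap (S : Finset ℕ) (x : ℕ) : ℕ := (S.filter (· ≤ x)).card

/-- Standardization of a set partition: relabel its entries to `{1,…,m}` preserving order. -/
def stdP (A : Finset (Finset ℕ)) : Finset (Finset ℕ) :=
  A.image fun b => b.image (stMap (A.sup id))

/-- The map raising `{1,…,|S|}` order-preservingly onto `S`. -/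
def raiseMap (S : Finset ℕ) (x : ℕ) : ℕ := (S.sort (· ≤ ·)).getD (x - 1) 0

/-- `A↑_S`: raise the entries of `A` order-preservingly so the ground set becomes `S`. -/
def raiseP (S : Finset ℕ) (A : Finset (Finset ℕ)) : Finset (Finset ℕ) :=
  A.image fun b => b.image (raiseMap S)

/-- `IsShuffle l₁ l₂ l`: `l` is a shuffle (interleaving) of `l₁` and `l₂`. -/
inductive IsShuffle {α : Type*} : List α → List α → List α → Prop
  | nil : IsShuffle [] [] []
  | left {a : α} {l₁ l₂ l : List α} : IsShuffle l₁ l₂ l → IsShuffle (a :: l₁) l₂ (a :: l)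
  | right {a : α} {l₁ l₂ l : List α} : IsShuffle l₁ l₂ l → IsShuffle l₁ (a :: l₂) (a :: l)

/-- A word is Lyndon if it is nonempty and lexicographically strictly smaller than all of
its proper cyclic rotations. -/
def LyndonWord {α : Type*} (lt : α → α → Prop) (w : List α) : Prop :=
  w ≠ [] ∧ ∀ i, 0 < i → i < w.length → List.Lex lt w (w.rotate i)

/-- A set partition is Lyndon (with respect to a total order `lt` on atomic set partitions)
if its atomic factorization is a Lyndon word. -/
def LyndonPartition (lt : ℕ × Finset (Finset ℕ) → ℕ × Finset (Finset ℕ) → Prop)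
    (n : ℕ) (A : Finset (Finset ℕ)) : Prop :=
  ∃ L, AtomicFactorization n A L ∧ LyndonWord lt L

/-! ### Set compositions -/

/-- `Φ` is a set composition of `[n]`: an ordered sequence of nonempty pairwise disjoint
sets whose union is `[n]`. -/
def IsSetComposition (n : ℕ) (Φ : List (Finset ℕ)) : Prop :=
  (∀ B ∈ Φ, B.Nonempty) ∧ Φ.Pairwise Disjoint ∧ Φ.foldr (· ∪ ·) ∅ = ground n

/-- Shift every entry of every part of a set composition by `n`. -/
def shiftC (n : ℕ) (Φ : List (Finset ℕ)) : List (Finset ℕ) :=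
  Φ.map (·.image (· + n))

/-- Shifted concatenation `Φ|Ψ` of set compositions, `Φ ⊨ [n]`. -/
def concatC (n : ℕ) (Φ Ψ : List (Finset ℕ)) : List (Finset ℕ) := Φ ++ shiftC n Ψ

/-- An atomic set composition: nonempty and not a nontrivial shifted concatenation. -/
def AtomicC (n : ℕ) (Φ : List (Finset ℕ)) : Prop :=
  IsSetComposition n Φ ∧ 0 < n ∧
  ¬ ∃ k Ψ Γ, 0 < k ∧ k < n ∧ IsSetComposition k Ψ ∧ IsSetComposition (n - k) Γ ∧
      Φ = concatC k Ψ Γ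

/-- Shifted concatenation of a list of (size, set composition) pairs. -/
def concatListC : List (ℕ × List (Finset ℕ)) → ℕ × List (Finset ℕ)
  | [] => (0, [])
  | p :: L => ((concatListC L).1 + p.1, concatC p.1 p.2 (concatListC L).2)

/-- `L` is the atomic factorization `Φ^!` of the set composition `Φ ⊨ [n]`. -/
def AtomicFactorizationC (n : ℕ) (Φ : List (Finset ℕ))
    (L : List (ℕ × List (Finset ℕ))) : Prop :=
  (∀ p ∈ L, AtomicC p.1 p.2) ∧ concatListC L = (n, Φ)

/-- Covering relation for `≤_*` on set compositions: merge two adjacent parts `a, b` with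
every element of `a` smaller than every element of `b`. -/
def coverStarC (Φ Ψ : List (Finset ℕ)) : Prop :=
  ∃ L₁ a b L₂, Φ = L₁ ++ a :: b :: L₂ ∧ (∀ x ∈ a, ∀ y ∈ b, x < y) ∧
    Ψ = L₁ ++ (a ∪ b) :: L₂

/-- The order `≤_*` on set compositions. -/
def leStarC : List (Finset ℕ) → List (Finset ℕ) → Prop :=
  Relation.ReflTransGen coverStarC

/-- The meet operation `Φ ∧ Ψ` on set compositions: the nonempty intersections
`Φ_i ∩ Ψ_j` in lexicographic order of `(i, j)`. -/
def meetC (Φ Ψ : List (Finset ℕ)) : List (Finset ℕ) :=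
  (Φ.flatMap fun a => Ψ.map fun b => a ∩ b).filter (·.Nonempty)

/-- The one-part set composition `([n])` (empty if `n = 0`). -/
def onePartC (n : ℕ) : List (Finset ℕ) := if n = 0 then [] else [ground n]

/-- Lists of length `k` with all entries in `s`. -/
def listsOfLen (s : Finset (Finset ℕ)) : ℕ → Finset (List (Finset ℕ))
  | 0 => {[]}
  | k + 1 => (s ×ˢ listsOfLen s k).image fun p => p.1 :: p.2

/-- The finite set of set compositions of `[n]` satisfying a predicate `P`. -/
def SCs (n : ℕ) (P : List (Finset ℕ) → Prop) : Finset (List (Finset ℕ)) :=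
  ((Finset.range (n + 1)).biUnion fun k => listsOfLen (ground n).powerset k).filter
    fun Φ => IsSetComposition n Φ ∧ P Φ

/-- `Φ↑_S`: raise the entries of a set composition order-preservingly into `S`. -/
def raiseC (S : Finset ℕ) (Φ : List (Finset ℕ)) : List (Finset ℕ) :=
  Φ.map (·.image (raiseMap S))

/-- Standardization of a set composition. -/
def stdC (Φ : List (Finset ℕ)) : List (Finset ℕ) :=
  Φ.map (·.image (stMap (Φ.foldr (· ∪ ·) ∅)))

/-- `α(Φ)`: the composition of part sizes of `Φ`. -/
def alphaC (Φ : List (Finset ℕ)) : List ℕ := Φ.map Finset.card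

/-- The order `≤_#` on set compositions: `Φ ≤_# Ψ` iff `α(Φ) = α(Ψ)` and each atomic factor
of `Φ` is the standardization of the corresponding consecutive block of parts of `Ψ`. -/
def leSharp (Φ Ψ : List (Finset ℕ)) : Prop :=
  alphaC Φ = alphaC Ψ ∧
  ∃ (L : List (ℕ × List (Finset ℕ))) (Bs : List (List (Finset ℕ))),
    (∀ p ∈ L, AtomicC p.1 p.2) ∧ (concatListC L).2 = Φ ∧
    Ψ = Bs.flatten ∧ List.Forall₂ (fun b (l : ℕ × List (Finset ℕ)) => stdC b = l.2) Bs L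

/-! ### Index types -/

/-- Set partitions with their sizes. -/
abbrev SPIdx := {x : ℕ × Finset (Finset ℕ) // IsSetPartition x.1 x.2}

/-- Atomic set partitions with their sizes. -/
abbrev AtomIdx := {x : ℕ × Finset (Finset ℕ) // AtomicP x.1 x.2}

/-- Set compositions with their sizes. -/
abbrev SCIdx := {x : ℕ × List (Finset ℕ) // IsSetComposition x.1 x.2}

/-- Atomic set compositions with their sizes. -/
abbrev AtomCIdx := {x : ℕ × List (Finset ℕ) // AtomicC x.1 x.2}

namespace NCSymAux
open Finset

lemma mem_ground {n x : ℕ} : x ∈ ground n ↔ 1 ≤ x ∧ x ≤ n := Finset.mem_Icc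

lemma part_subset_ground {n : ℕ} {A : Finset (Finset ℕ)} (hA : IsSetPartition n A)
    {b : Finset ℕ} (hb : b ∈ A) : b ⊆ ground n := by
  have h := Finset.le_sup (f := id) hb
  rw [hA.2.2] at h; exact h

lemma exists_part {n : ℕ} {A : Finset (Finset ℕ)} (hA : IsSetPartition n A)
    {x : ℕ} (hx : x ∈ ground n) : ∃ b ∈ A, x ∈ b := by
  rw [← hA.2.2] at hx
  exact Finset.mem_sup.mp hx

lemma isSetPartition_zero : IsSetPartition 0 (∅ : Finset (Finset ℕ)) := by
  refine ⟨by simp, by simp, ?_⟩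
  simp [ground, Finset.Icc_eq_empty (by omega : ¬ (1:ℕ) ≤ 0)]

lemma sp_zero {A : Finset (Finset ℕ)} (h : IsSetPartition 0 A) : A = ∅ := by
  rcases Finset.eq_empty_or_nonempty A with rfl | ⟨b, hb⟩
  · rfl
  · obtain ⟨x, hx⟩ := h.1 b hb
    have := mem_ground.mp (part_subset_ground h hb hx)
    omega

lemma mem_SPs {n : ℕ} {P : Finset (Finset ℕ) → Prop} {A : Finset (Finset ℕ)} :
    A ∈ SPs n P ↔ IsSetPartition n A ∧ P A := by
  rw [SPs, Finset.mem_filter, Finset.mem_powerset]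
  constructor
  · exact fun h => h.2
  · intro h
    refine ⟨?_, h⟩
    intro b hb
    exact Finset.mem_powerset.mpr (part_subset_ground h.1 hb)

lemma mem_concatP {k : ℕ} {B C : Finset (Finset ℕ)} {e : Finset ℕ} :
    e ∈ concatP k B C ↔ e ∈ B ∨ ∃ c ∈ C, e = c.image (· + k) := by
  simp [concatP, shiftP, Finset.mem_union, Finset.mem_image, eq_comm]

lemma unshift_shift_part {k : ℕ} (c : Finset ℕ) : (c.image (· + k)).image (· - k) = c := by
  rw [Finset.image_image]
  have : ((· - k) ∘ (· + k) : ℕ → ℕ) = id := by funext x; simp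
  rw [this, Finset.image_id]

lemma concat_partition {k j : ℕ} {B C : Finset (Finset ℕ)} (hB : IsSetPartition k B)
    (hC : IsSetPartition j C) : IsSetPartition (k + j) (concatP k B C) := by
  have hlow : ∀ b ∈ B, ∀ x ∈ b, 1 ≤ x ∧ x ≤ k := fun b hb x hx =>
    mem_ground.mp (part_subset_ground hB hb hx)
  have hhigh : ∀ c ∈ C, ∀ x ∈ c.image (· + k), k < x ∧ x ≤ k + j := by
    intro c hc x hx
    rcases Finset.mem_image.mp hx with ⟨y, hy, rfl⟩
    have := mem_ground.mp (part_subset_ground hC hc hy)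
    omega
  refine ⟨?_, ?_, ?_⟩
  · intro b hb
    rcases mem_concatP.mp hb with h | ⟨c, hc, rfl⟩
    · exact hB.1 b h
    · exact (hC.1 c hc).image _
  · intro b hb c hc hne
    rcases mem_concatP.mp hb with h1 | ⟨b', hb', rfl⟩ <;>
      rcases mem_concatP.mp hc with h2 | ⟨c', hc', rfl⟩
    · exact hB.2.1 b h1 c h2 hne
    · refine Finset.disjoint_left.mpr fun x hx1 hx2 => ?_
      have := (hlow b h1 x hx1).2; have := (hhigh c' hc' x hx2).1; omega
    · refine Finset.disjoint_left.mpr fun x hx1 hx2 => ?_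
      have := (hhigh b' hb' x hx1).1; have := (hlow c h2 x hx2).2; omega
    · have hbc : b' ≠ c' := fun h => hne (by rw [h])
      exact (Finset.disjoint_image (add_left_injective k)).mpr (hC.2.1 b' hb' c' hc' hbc)
  · apply Finset.ext
    intro x
    rw [Finset.mem_sup]
    constructor
    · rintro ⟨b, hb, hx⟩
      rcases mem_concatP.mp hb with h | ⟨c, hc, rfl⟩
      · have := hlow b h x hx; exact mem_ground.mpr ⟨this.1, by omega⟩
      · have := hhigh c hc x hx; exact mem_ground.mpr ⟨by omega, this.2⟩
    · intro hx
      have hx' := mem_ground.mp hx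
      by_cases hxk : x ≤ k
      · obtain ⟨b, hb, hxb⟩ := exists_part hB (mem_ground.mpr ⟨hx'.1, hxk⟩)
        exact ⟨b, mem_concatP.mpr (Or.inl hb), hxb⟩
      · obtain ⟨c, hc, hxc⟩ := exists_part hC (mem_ground.mpr (⟨by omega, by omega⟩ : 1 ≤ x - k ∧ x - k ≤ j))
        refine ⟨c.image (· + k), mem_concatP.mpr (Or.inr ⟨c, hc, rfl⟩), ?_⟩
        exact Finset.mem_image.mpr ⟨x - k, hxc, by omega⟩

end NCSymAux
namespace NCSymAux

def unshiftP (k : ℕ) (A : Finset (Finset ℕ)) : Finset (Finset ℕ) :=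
  A.image (fun b => b.image (· - k))

lemma shift_unshift_part {k : ℕ} {e : Finset ℕ} (he : ∀ x ∈ e, k < x) :
    (e.image (· - k)).image (· + k) = e := by
  rw [Finset.image_image]
  have : e.image ((· + k) ∘ (· - k)) = e.image id := by
    apply Finset.image_congr
    intro x hx
    have := he x hx
    simp only [Function.comp_apply, id_eq]
    omega
  rw [this, Finset.image_id]

lemma unshiftP_shiftP (k : ℕ) (C : Finset (Finset ℕ)) : unshiftP k (shiftP k C) = C := by
  rw [shiftP, unshiftP, Finset.image_image]
  have : ((fun b => Finset.image (· - k) b) ∘ (fun b => Finset.image (· + k) b) : Finset ℕ → Finset ℕ) = id := by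
    funext b; simp only [Function.comp_apply, id_eq]; exact unshift_shift_part b
  rw [this, Finset.image_id]

/-- The key splitting lemma. -/
lemma split_partition {k j : ℕ} {E : Finset (Finset ℕ)} (hE : IsSetPartition (k + j) E)
    (hdi : ∀ e ∈ E, e ⊆ ground k ∨ ∀ x ∈ e, k < x) :
    IsSetPartition k (E.filter (· ⊆ ground k)) ∧
    IsSetPartition j (unshiftP k (E.filter (fun e => ¬ e ⊆ ground k))) ∧
    E = concatP k (E.filter (· ⊆ ground k)) (unshiftP k (E.filter (fun e => ¬ e ⊆ ground k))) := by
  set Lo := E.filter (· ⊆ ground k) with hLo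
  set Hi := E.filter (fun e => ¬ e ⊆ ground k) with hHi
  have hHihigh : ∀ e ∈ Hi, ∀ x ∈ e, k < x := by
    intro e he
    rcases Finset.mem_filter.mp he with ⟨heE, hnot⟩
    rcases hdi e heE with h | h
    · exact absurd h hnot
    · exact h
  have hsub : ∀ e ∈ E, e ⊆ ground (k + j) := fun e he => part_subset_ground hE he
  have hLok : IsSetPartition k Lo := by
    refine ⟨fun b hb => hE.1 b (Finset.mem_filter.mp hb).1, ?_, ?_⟩
    · intro b hb c hc hne
      exact hE.2.1 b (Finset.mem_filter.mp hb).1 c (Finset.mem_filter.mp hc).1 hne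
    · apply Finset.ext
      intro x
      rw [Finset.mem_sup]
      constructor
      · rintro ⟨b, hb, hx⟩
        exact (Finset.mem_filter.mp hb).2 hx
      · intro hx
        have hx' := mem_ground.mp hx
        obtain ⟨b, hb, hxb⟩ := exists_part hE (mem_ground.mpr ⟨hx'.1, by omega⟩)
        refine ⟨b, Finset.mem_filter.mpr ⟨hb, ?_⟩, hxb⟩
        rcases hdi b hb with h | h
        · exact h
        · exact absurd (h x hxb) (by omega)
  have hHij : IsSetPartition j (unshiftP k Hi) := by
    refine ⟨?_, ?_, ?_⟩
    · intro b hb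
      rcases Finset.mem_image.mp hb with ⟨e, he, rfl⟩
      exact (hE.1 e (Finset.mem_filter.mp he).1).image _
    · intro b hb c hc hne
      rcases Finset.mem_image.mp hb with ⟨e, he, rfl⟩
      rcases Finset.mem_image.mp hc with ⟨e', he', rfl⟩
      have hee : e ≠ e' := fun h => hne (by rw [h])
      have hd := hE.2.1 e (Finset.mem_filter.mp he).1 e' (Finset.mem_filter.mp he').1 hee
      refine Finset.disjoint_left.mpr fun x hx1 hx2 => ?_
      rcases Finset.mem_image.mp hx1 with ⟨y, hy, rfl⟩
      rcases Finset.mem_image.mp hx2 with ⟨y', hy', hyy⟩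
      have h1 := hHihigh e he y hy
      have h2 := hHihigh e' he' y' hy'
      have : y = y' := by omega
      exact Finset.disjoint_left.mp hd hy (this ▸ hy')
    · apply Finset.ext
      intro x
      rw [Finset.mem_sup]
      constructor
      · rintro ⟨b, hb, hx⟩
        rcases Finset.mem_image.mp hb with ⟨e, he, rfl⟩
        rcases Finset.mem_image.mp hx with ⟨y, hy, rfl⟩
        have h1 := hHihigh e he y hy
        have h2 := mem_ground.mp (hsub e (Finset.mem_filter.mp he).1 hy)
        exact mem_ground.mpr ⟨by omega, by omega⟩
      · intro hx
        have hx' := mem_ground.mp hx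
        obtain ⟨e, he, hxe⟩ := exists_part hE (mem_ground.mpr (⟨by omega, by omega⟩ : 1 ≤ x + k ∧ x + k ≤ k + j))
        have heHi : e ∈ Hi := by
          refine Finset.mem_filter.mpr ⟨he, fun hlow => ?_⟩
          have := mem_ground.mp (hlow hxe)
          omega
        refine ⟨e.image (· - k), Finset.mem_image.mpr ⟨e, heHi, rfl⟩, ?_⟩
        exact Finset.mem_image.mpr ⟨x + k, hxe, by omega⟩
  refine ⟨hLok, hHij, ?_⟩
  rw [concatP]
  have hshift : shiftP k (unshiftP k Hi) = Hi := by
    rw [shiftP, unshiftP, Finset.image_image]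
    have : Hi.image ((fun b => Finset.image (· + k) b) ∘ (fun b => Finset.image (· - k) b)) = Hi.image id := by
      apply Finset.image_congr
      intro e he
      simp only [Function.comp_apply, id_eq]
      exact shift_unshift_part (hHihigh e he)
    rw [this, Finset.image_id]
  rw [hshift, hLo, hHi, Finset.filter_union_filter_not_eq]

lemma concat_filter {k j : ℕ} {B C : Finset (Finset ℕ)} (hB : IsSetPartition k B)
    (hC : IsSetPartition j C) :
    (concatP k B C).filter (· ⊆ ground k) = B ∧
    (concatP k B C).filter (fun e => ¬ e ⊆ ground k) = shiftP k C := by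
  have hhigh : ∀ c ∈ C, ¬ (c.image (· + k) ⊆ ground k) := by
    intro c hc hsubk
    obtain ⟨y, hy⟩ := hC.1 c hc
    have := mem_ground.mp (hsubk (Finset.mem_image.mpr ⟨y, hy, rfl⟩))
    have := mem_ground.mp (part_subset_ground hC hc hy)
    omega
  constructor
  · apply Finset.ext
    intro e
    rw [Finset.mem_filter]
    constructor
    · rintro ⟨he, hlow⟩
      rcases mem_concatP.mp he with h | ⟨c, hc, rfl⟩
      · exact h
      · exact absurd hlow (hhigh c hc)
    · intro he
      exact ⟨mem_concatP.mpr (Or.inl he), part_subset_ground hB he⟩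
  · apply Finset.ext
    intro e
    rw [Finset.mem_filter]
    constructor
    · rintro ⟨he, hnlow⟩
      rcases mem_concatP.mp he with h | ⟨c, hc, rfl⟩
      · exact absurd (part_subset_ground hB h) hnlow
      · exact Finset.mem_image.mpr ⟨c, hc, rfl⟩
    · intro he
      rcases Finset.mem_image.mp he with ⟨c, hc, rfl⟩
      exact ⟨mem_concatP.mpr (Or.inr ⟨c, hc, rfl⟩), hhigh c hc⟩

lemma concat_inj {k j j' : ℕ} {B C B' C' : Finset (Finset ℕ)} (hB : IsSetPartition k B)
    (hC : IsSetPartition j C) (hB' : IsSetPartition k B') (hC' : IsSetPartition j' C')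
    (h : concatP k B C = concatP k B' C') : B = B' ∧ C = C' := by
  have h1 := concat_filter hB hC
  have h2 := concat_filter hB' hC'
  constructor
  · rw [← h1.1, ← h2.1, h]
  · have : shiftP k C = shiftP k C' := by rw [← h1.2, ← h2.2, h]
    have := congrArg (unshiftP k) this
    rwa [unshiftP_shiftP, unshiftP_shiftP] at this

end NCSymAux
namespace NCSymAux

lemma concatListP_nil : concatListP [] = (0, (∅ : Finset (Finset ℕ))) := rfl

lemma concatListP_cons (p : ℕ × Finset (Finset ℕ)) (L : List (ℕ × Finset (Finset ℕ))) :
    concatListP (p :: L) = ((concatListP L).1 + p.1, concatP p.1 p.2 (concatListP L).2) := rfl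

lemma concatListP_partition {L : List (ℕ × Finset (Finset ℕ))}
    (h : ∀ p ∈ L, AtomicP p.1 p.2) :
    IsSetPartition (concatListP L).1 (concatListP L).2 := by
  induction L with
  | nil => exact isSetPartition_zero
  | cons p L ih =>
    have h1 := (h p (List.mem_cons_self)).1
    have h2 := ih (fun q hq => h q (List.mem_cons_of_mem _ hq))
    rw [concatListP_cons]
    have := concat_partition h1 h2
    rwa [Nat.add_comm] at this

lemma shiftP_zero (C : Finset (Finset ℕ)) : shiftP 0 C = C := by
  rw [shiftP]
  have : C.image (fun b => Finset.image (· + 0) b) = C.image id := by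
    apply Finset.image_congr
    intro b _
    simp
  rw [this, Finset.image_id]

lemma shiftP_shiftP (a b : ℕ) (C : Finset (Finset ℕ)) :
    shiftP a (shiftP b C) = shiftP (a + b) C := by
  rw [shiftP, shiftP, shiftP, Finset.image_image]
  apply Finset.image_congr
  intro c _
  simp only [Function.comp_apply, Finset.image_image]
  apply Finset.image_congr
  intro x _
  simp only [Function.comp_apply]
  omega

lemma shiftP_union (a : ℕ) (X Y : Finset (Finset ℕ)) :
    shiftP a (X ∪ Y) = shiftP a X ∪ shiftP a Y := Finset.image_union _ _

lemma concatP_assoc (a b : ℕ) (X Y Z : Finset (Finset ℕ)) :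
    concatP a X (concatP b Y Z) = concatP (a + b) (concatP a X Y) Z := by
  simp only [concatP, shiftP_union, shiftP_shiftP, Finset.union_assoc]

lemma concatListP_append (L₁ L₂ : List (ℕ × Finset (Finset ℕ))) :
    concatListP (L₁ ++ L₂) =
      ((concatListP L₁).1 + (concatListP L₂).1,
        concatP (concatListP L₁).1 (concatListP L₁).2 (concatListP L₂).2) := by
  induction L₁ with
  | nil =>
    simp only [List.nil_append, concatListP_nil]
    rw [concatP]
    simp [shiftP_zero]
  | cons p L ih =>
    rw [List.cons_append, concatListP_cons, ih, concatListP_cons]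
    simp only [Prod.mk.injEq]
    constructor
    · omega
    · rw [concatP_assoc]
      congr 1
      omega

lemma factorization_exists (n : ℕ) : ∀ A : Finset (Finset ℕ), IsSetPartition n A →
    ∃ L, (∀ p ∈ L, AtomicP p.1 p.2) ∧ concatListP L = (n, A) := by
  induction n using Nat.strong_induction_on with
  | _ n ih =>
    intro A hA
    rcases Nat.eq_zero_or_pos n with rfl | hn
    · exact ⟨[], by simp, by rw [sp_zero hA]; rfl⟩
    by_cases hat : AtomicP n A
    · refine ⟨[(n, A)], by simpa using hat, ?_⟩
      rw [concatListP_cons, concatListP_nil]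
      simp [concatP, shiftP]
    · have hex : ∃ k B C, 0 < k ∧ k < n ∧ IsSetPartition k B ∧ IsSetPartition (n - k) C ∧
          A = concatP k B C := by
        by_contra h
        exact hat ⟨hA, hn, h⟩
      rcases hex with ⟨k, B, C, hk0, hkn, hB, hC, rfl⟩
      rcases ih k hkn B hB with ⟨L₁, hL₁, hc₁⟩
      rcases ih (n - k) (by omega) C hC with ⟨L₂, hL₂, hc₂⟩
      refine ⟨L₁ ++ L₂, ?_, ?_⟩
      · intro p hp
        rcases List.mem_append.mp hp with h | h
        · exact hL₁ p h
        · exact hL₂ p h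
      · rw [concatListP_append, hc₁, hc₂]
        simp only [Prod.mk.injEq]
        exact ⟨by omega, trivial⟩

lemma head_size_not_lt {k j s t : ℕ} {P X Q Y : Finset (Finset ℕ)}
    (hP : AtomicP k P) (hQ : AtomicP j Q) (hX : IsSetPartition s X) (hY : IsSetPartition t Y)
    (heq : concatP k P X = concatP j Q Y) : ¬ k < j := by
  intro hkj
  have hAkP : IsSetPartition (k + s) (concatP k P X) := concat_partition hP.1 hX
  have hQfil := (concat_filter hQ.1 hY).1
  rw [← heq] at hQfil
  -- dichotomy for parts of concatP k P X
  have hdiA : ∀ e ∈ concatP k P X, e ⊆ ground k ∨ ∀ x ∈ e, k < x := by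
    intro e he
    rcases mem_concatP.mp he with h | ⟨c, hc, rfl⟩
    · exact Or.inl (part_subset_ground hP.1 h)
    · right
      intro x hx
      rcases Finset.mem_image.mp hx with ⟨y, hy, rfl⟩
      have := mem_ground.mp (part_subset_ground hX hc hy)
      omega
  have hdiQ : ∀ e ∈ Q, e ⊆ ground k ∨ ∀ x ∈ e, k < x := by
    intro e he
    have : e ∈ concatP k P X := by
      rw [← hQfil] at he
      exact (Finset.mem_filter.mp he).1
    exact hdiA e this
  have hQpart : IsSetPartition (k + (j - k)) Q := by
    have := hQ.1
    rwa [show k + (j - k) = j by omega]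
  obtain ⟨hlo, hhi, hdecomp⟩ := split_partition hQpart hdiQ
  exact hQ.2.2 ⟨k, _, _, hP.2.1, hkj, hlo, hhi, hdecomp⟩

lemma factorization_unique : ∀ L₁ L₂ : List (ℕ × Finset (Finset ℕ)),
    (∀ p ∈ L₁, AtomicP p.1 p.2) → (∀ p ∈ L₂, AtomicP p.1 p.2) →
    concatListP L₁ = concatListP L₂ → L₁ = L₂ := by
  intro L₁
  induction L₁ with
  | nil =>
    intro L₂ _ h2 heq
    cases L₂ with
    | nil => rfl
    | cons q M =>
      exfalso
      have hq := (h2 q (List.mem_cons_self)).2.1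
      have hsz : (0 : ℕ) = (concatListP M).1 + q.1 := congrArg Prod.fst heq
      omega
  | cons p L ih =>
    intro L₂ h1 h2 heq
    cases L₂ with
    | nil =>
      exfalso
      have hp := (h1 p (List.mem_cons_self)).2.1
      have hsz : (concatListP L).1 + p.1 = (0 : ℕ) := congrArg Prod.fst heq
      omega
    | cons q M =>
      have hp := h1 p (List.mem_cons_self)
      have hq := h2 q (List.mem_cons_self)
      have hX := concatListP_partition (fun r hr => h1 r (List.mem_cons_of_mem _ hr))
      have hY := concatListP_partition (fun r hr => h2 r (List.mem_cons_of_mem _ hr))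
      have hsz : (concatListP L).1 + p.1 = (concatListP M).1 + q.1 := congrArg Prod.fst heq
      have hcc : concatP p.1 p.2 (concatListP L).2 = concatP q.1 q.2 (concatListP M).2 :=
        congrArg Prod.snd heq
      have hk : p.1 = q.1 := by
        rcases lt_trichotomy p.1 q.1 with h | h | h
        · exact absurd h (head_size_not_lt hp hq hX hY hcc)
        · exact h
        · exact absurd h (head_size_not_lt hq hp hY hX hcc.symm)
      have hp1 : IsSetPartition q.1 p.2 := hk ▸ hp.1
      rw [hk] at hcc
      obtain ⟨hBB, hCC⟩ := concat_inj hp1 hX hq.1 hY hcc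
      have htl : concatListP L = concatListP M := by
        apply Prod.ext
        · omega
        · exact hCC
      have hLM := ih M (fun r hr => h1 r (List.mem_cons_of_mem _ hr))
        (fun r hr => h2 r (List.mem_cons_of_mem _ hr)) htl
      rw [hLM]
      congr 1
      exact Prod.ext hk hBB

end NCSymAux
namespace NCSymAux

lemma refines_refl (A : Finset (Finset ℕ)) : refines A A :=
  fun a ha => ⟨a, ha, Finset.Subset.refl a⟩

lemma refines_trans {A B C : Finset (Finset ℕ)} (h1 : refines A B) (h2 : refines B C) :
    refines A C := by
  intro a ha
  obtain ⟨b, hb, hab⟩ := h1 a ha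
  obtain ⟨c, hc, hbc⟩ := h2 b hb
  exact ⟨c, hc, hab.trans hbc⟩

lemma refines_subset {A B : Finset (Finset ℕ)}
    (hAne : ∀ a ∈ A, a.Nonempty) (hAdis : ∀ a ∈ A, ∀ a' ∈ A, a ≠ a' → Disjoint a a')
    (h1 : refines A B) (h2 : refines B A) : A ⊆ B := by
  intro a ha
  obtain ⟨b, hb, hab⟩ := h1 a ha
  obtain ⟨a', ha', hba⟩ := h2 b hb
  have haa : a = a' := by
    by_contra hne
    obtain ⟨x, hx⟩ := hAne a ha
    exact (Finset.disjoint_left.mp (hAdis a ha a' ha' hne) hx) (hba (hab hx))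
  have : a = b := Finset.Subset.antisymm hab (by rw [haa]; exact hba)
  rwa [this]

lemma refines_antisymm {n n' : ℕ} {A B : Finset (Finset ℕ)} (hA : IsSetPartition n A)
    (hB : IsSetPartition n' B) (h1 : refines A B) (h2 : refines B A) : A = B :=
  Finset.Subset.antisymm (refines_subset hA.1 hA.2.1 h1 h2) (refines_subset hB.1 hB.2.1 h2 h1)

lemma mem_meetP {C D : Finset (Finset ℕ)} {e : Finset ℕ} :
    e ∈ meetP C D ↔ (∃ c ∈ C, ∃ d ∈ D, c ∩ d = e) ∧ e.Nonempty := by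
  simp [meetP, Finset.mem_filter, Finset.mem_image, Finset.mem_product]
  tauto

lemma meetP_partition {n : ℕ} {C D : Finset (Finset ℕ)} (hC : IsSetPartition n C)
    (hD : IsSetPartition n D) : IsSetPartition n (meetP C D) := by
  refine ⟨?_, ?_, ?_⟩
  · intro e he
    exact (mem_meetP.mp he).2
  · intro e he f hf hne
    obtain ⟨⟨c, hc, d, hd, rfl⟩, _⟩ := mem_meetP.mp he
    obtain ⟨⟨c', hc', d', hd', rfl⟩, _⟩ := mem_meetP.mp hf
    by_cases hcc : c = c'
    · have hdd : d ≠ d' := by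
        intro h
        exact hne (by rw [hcc, h])
      have := hD.2.1 d hd d' hd' hdd
      exact this.mono (Finset.inter_subset_right) (Finset.inter_subset_right)
    · have := hC.2.1 c hc c' hc' hcc
      exact this.mono (Finset.inter_subset_left) (Finset.inter_subset_left)
  · apply Finset.ext
    intro x
    rw [Finset.mem_sup]
    constructor
    · rintro ⟨e, he, hx⟩
      obtain ⟨⟨c, hc, d, hd, rfl⟩, _⟩ := mem_meetP.mp he
      exact part_subset_ground hC hc (Finset.mem_inter.mp hx).1
    · intro hx
      obtain ⟨c, hc, hxc⟩ := exists_part hC hx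
      obtain ⟨d, hd, hxd⟩ := exists_part hD hx
      refine ⟨c ∩ d, mem_meetP.mpr ⟨⟨c, hc, d, hd, rfl⟩, ⟨x, Finset.mem_inter.mpr ⟨hxc, hxd⟩⟩⟩, ?_⟩
      exact Finset.mem_inter.mpr ⟨hxc, hxd⟩

lemma meetP_refines_left {C D : Finset (Finset ℕ)} : refines (meetP C D) C := by
  intro e he
  obtain ⟨⟨c, hc, d, hd, rfl⟩, _⟩ := mem_meetP.mp he
  exact ⟨c, hc, Finset.inter_subset_left⟩

lemma meetP_refines_right {C D : Finset (Finset ℕ)} : refines (meetP C D) D := by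
  intro e he
  obtain ⟨⟨c, hc, d, hd, rfl⟩, _⟩ := mem_meetP.mp he
  exact ⟨d, hd, Finset.inter_subset_right⟩

lemma refines_meetP {X C D : Finset (Finset ℕ)} (hX : ∀ x ∈ X, x.Nonempty)
    (h1 : refines X C) (h2 : refines X D) : refines X (meetP C D) := by
  intro x hx
  obtain ⟨c, hc, hxc⟩ := h1 x hx
  obtain ⟨d, hd, hxd⟩ := h2 x hx
  obtain ⟨y, hy⟩ := hX x hx
  refine ⟨c ∩ d, mem_meetP.mpr ⟨⟨c, hc, d, hd, rfl⟩, ⟨y, Finset.mem_inter.mpr ⟨hxc hy, hxd hy⟩⟩⟩, ?_⟩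
  exact Finset.subset_inter hxc hxd

lemma onePart_partition (n : ℕ) : IsSetPartition n (onePartP n) := by
  rcases Nat.eq_zero_or_pos n with rfl | hn
  · rw [onePartP, if_pos rfl]
    exact isSetPartition_zero
  · rw [onePartP, if_neg (by omega)]
    refine ⟨?_, ?_, ?_⟩
    · intro b hb
      rw [Finset.mem_singleton] at hb
      exact ⟨1, by rw [hb]; exact mem_ground.mpr ⟨le_refl 1, hn⟩⟩
    · intro b hb c hc hne
      rw [Finset.mem_singleton] at hb hc
      exact absurd (hb.trans hc.symm) hne
    · simp

lemma concat_dichotomy {n j : ℕ} {A B : Finset (Finset ℕ)} (hA : IsSetPartition n A)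
    (hB : IsSetPartition j B) :
    ∀ e ∈ concatP n A B, e ⊆ ground n ∨ ∀ x ∈ e, n < x := by
  intro e he
  rcases mem_concatP.mp he with h | ⟨c, hc, rfl⟩
  · exact Or.inl (part_subset_ground hA h)
  · right
    intro x hx
    rcases Finset.mem_image.mp hx with ⟨y, hy, rfl⟩
    have := mem_ground.mp (part_subset_ground hB hc hy)
    omega

lemma refines_D_iff {n k : ℕ} {E : Finset (Finset ℕ)} (hE : IsSetPartition (n + k) E) :
    refines E (concatP n (onePartP n) (onePartP k)) ↔
      ∀ e ∈ E, e ⊆ ground n ∨ ∀ x ∈ e, n < x := by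
  constructor
  · intro h e he
    obtain ⟨d, hd, hed⟩ := h e he
    rcases mem_concatP.mp hd with h1 | ⟨c, hc, rfl⟩
    · rw [onePartP] at h1
      by_cases hn : n = 0
      · rw [if_pos hn] at h1; exact absurd h1 (Finset.notMem_empty d)
      · rw [if_neg hn, Finset.mem_singleton] at h1
        exact Or.inl (h1 ▸ hed)
    · rw [onePartP] at hc
      by_cases hk : k = 0
      · rw [if_pos hk] at hc; exact absurd hc (Finset.notMem_empty c)
      · rw [if_neg hk, Finset.mem_singleton] at hc
        right
        intro x hx
        rcases Finset.mem_image.mp (hed hx) with ⟨y, hy, rfl⟩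
        rw [hc] at hy
        have := mem_ground.mp hy
        omega
  · intro h e he
    obtain ⟨x, hx⟩ := hE.1 e he
    have hxg := mem_ground.mp (part_subset_ground hE he hx)
    rcases h e he with hlow | hhigh
    · have hn : n ≠ 0 := by
        have := mem_ground.mp (hlow hx)
        omega
      refine ⟨ground n, mem_concatP.mpr (Or.inl ?_), hlow⟩
      rw [onePartP, if_neg hn]
      exact Finset.mem_singleton_self _
    · have hk : k ≠ 0 := by
        have := hhigh x hx
        omega
      refine ⟨(ground k).image (· + n), mem_concatP.mpr (Or.inr ⟨ground k, ?_, rfl⟩), ?_⟩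
      · rw [onePartP, if_neg hk]
        exact Finset.mem_singleton_self _
      · intro y hy
        have h1 := hhigh y hy
        have h2 := mem_ground.mp (part_subset_ground hE he hy)
        exact Finset.mem_image.mpr ⟨y - n, mem_ground.mpr ⟨by omega, by omega⟩, by omega⟩

lemma concat_refines_concat {n : ℕ} {A A' B B' : Finset (Finset ℕ)}
    (h1 : refines A A') (h2 : refines B B') :
    refines (concatP n A B) (concatP n A' B') := by
  intro e he
  rcases mem_concatP.mp he with h | ⟨c, hc, rfl⟩
  · obtain ⟨a', ha', haa⟩ := h1 e h
    exact ⟨a', mem_concatP.mpr (Or.inl ha'), haa⟩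
  · obtain ⟨b', hb', hbb⟩ := h2 c hc
    exact ⟨b'.image (· + n), mem_concatP.mpr (Or.inr ⟨b', hb', rfl⟩), Finset.image_subset_image hbb⟩

lemma refines_concat_split {n j j' : ℕ} {A B A' B' : Finset (Finset ℕ)}
    (hA : IsSetPartition n A) (hB : IsSetPartition j B) (hA' : IsSetPartition n A')
    (hB' : IsSetPartition j' B')
    (h : refines (concatP n A B) (concatP n A' B')) : refines A A' ∧ refines B B' := by
  constructor
  · intro a ha
    obtain ⟨e, he, hae⟩ := h a (mem_concatP.mpr (Or.inl ha))
    rcases mem_concatP.mp he with h1 | ⟨b', hb', rfl⟩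
    · exact ⟨e, h1, hae⟩
    · exfalso
      obtain ⟨x, hx⟩ := hA.1 a ha
      have hxn := mem_ground.mp (part_subset_ground hA ha hx)
      rcases Finset.mem_image.mp (hae hx) with ⟨y, hy, hxy⟩
      have := mem_ground.mp (part_subset_ground hB' hb' hy)
      omega
  · intro b hb
    obtain ⟨e, he, hbe⟩ := h (b.image (· + n)) (mem_concatP.mpr (Or.inr ⟨b, hb, rfl⟩))
    rcases mem_concatP.mp he with h1 | ⟨b', hb', rfl⟩
    · exfalso
      obtain ⟨y, hy⟩ := hB.1 b hb
      have hyj := mem_ground.mp (part_subset_ground hB hb hy)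
      have : y + n ∈ e := hbe (Finset.mem_image.mpr ⟨y, hy, rfl⟩)
      have := mem_ground.mp (part_subset_ground hA' h1 this)
      omega
    · refine ⟨b', hb', ?_⟩
      intro x hx
      rcases Finset.mem_image.mp (hbe (Finset.mem_image.mpr ⟨x, hx, rfl⟩)) with ⟨z, hz, hzx⟩
      have : z = x := by omega
      rwa [← this]

end NCSymAux
namespace NCSymAux

variable {R : Type*} [Ring R] [Algebra ℚ R]

def pfun (m : ℕ → Finset (Finset ℕ) → R) (n : ℕ) (A : Finset (Finset ℕ)) : R :=
  ∑ B ∈ SPs n (fun B => refines A B), m n B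

omit [Algebra ℚ R] in
lemma pfun_zero (m : ℕ → Finset (Finset ℕ) → R) : pfun m 0 ∅ = m 0 ∅ := by
  rw [pfun]
  have h : SPs 0 (fun B => refines (∅ : Finset (Finset ℕ)) B) = {∅} := by
    apply Finset.ext
    intro A
    rw [mem_SPs, Finset.mem_singleton]
    constructor
    · exact fun h => sp_zero h.1
    · rintro rfl
      exact ⟨isSetPartition_zero, fun a ha => absurd ha (Finset.notMem_empty a)⟩
  rw [h, Finset.sum_singleton]

omit [Algebra ℚ R] in
lemma pfun_mul (m : ℕ → Finset (Finset ℕ) → R)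
    (hmul : ∀ n k A B, IsSetPartition n A → IsSetPartition k B →
      m n A * m k B =
        ∑ C ∈ SPs (n + k)
            (fun C => meetP C (concatP n (onePartP n) (onePartP k)) = concatP n A B),
          m (n + k) C)
    {n k : ℕ} {A B : Finset (Finset ℕ)} (hA : IsSetPartition n A) (hB : IsSetPartition k B) :
    pfun m n A * pfun m k B = pfun m (n + k) (concatP n A B) := by
  classical
  set D := concatP n (onePartP n) (onePartP k) with hD
  have hDpart : IsSetPartition (n + k) D :=
    concat_partition (onePart_partition n) (onePart_partition k)
  have hABpart : IsSetPartition (n + k) (concatP n A B) := concat_partition hA hB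
  have hABD : refines (concatP n A B) D := (refines_D_iff hABpart).mpr (concat_dichotomy hA hB)
  set T := SPs (n + k) (fun C => refines (concatP n A B) C) with hT
  set S := SPs (n + k) (fun E => refines (concatP n A B) E ∧ refines E D) with hS
  -- inner fiber sets
  have hfiber : ∀ E ∈ S,
      SPs (n + k) (fun C => meetP C D = E) = T.filter (fun C => meetP C D = E) := by
    intro E hE
    obtain ⟨hEpart, hABE, hED⟩ := mem_SPs.mp hE
    apply Finset.ext
    intro C
    rw [Finset.mem_filter, mem_SPs, mem_SPs]
    constructor
    · rintro ⟨hC, hme⟩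
      exact ⟨⟨hC, refines_trans hABE (hme ▸ (meetP_refines_left (C := C) (D := D)))⟩, hme⟩
    · rintro ⟨⟨hC, _⟩, hme⟩
      exact ⟨hC, hme⟩
  calc pfun m n A * pfun m k B
      = ∑ x ∈ (SPs n (fun B' => refines A B')) ×ˢ (SPs k (fun B' => refines B B')),
          m n x.1 * m k x.2 := by
        rw [pfun, pfun, Finset.sum_mul_sum, ← Finset.sum_product']
    _ = ∑ E ∈ S, ∑ C ∈ T.filter (fun C => meetP C D = E), m (n + k) C := by
        apply Finset.sum_bij'
          (i := fun x _ => concatP n x.1 x.2)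
          (j := fun E _ => (E.filter (· ⊆ ground n), unshiftP n (E.filter (fun e => ¬ e ⊆ ground n))))
        · -- hi : image in S
          intro x hx
          rw [Finset.mem_product] at hx
          have hx1 := mem_SPs.mp hx.1
          have hx2 := mem_SPs.mp hx.2
          refine mem_SPs.mpr ⟨concat_partition hx1.1 hx2.1, ?_, ?_⟩
          · exact concat_refines_concat hx1.2 hx2.2
          · exact (refines_D_iff (concat_partition hx1.1 hx2.1)).mpr
              (concat_dichotomy hx1.1 hx2.1)
        · -- hj : inverse maps into product
          intro E hE
          obtain ⟨hEpart, hABE, hED⟩ := mem_SPs.mp hE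
          obtain ⟨hLo, hHi, hdec⟩ := split_partition hEpart ((refines_D_iff hEpart).mp hED)
          rw [hdec] at hABE
          obtain ⟨hrA, hrB⟩ := refines_concat_split hA hB hLo hHi hABE
          exact Finset.mem_product.mpr ⟨mem_SPs.mpr ⟨hLo, hrA⟩, mem_SPs.mpr ⟨hHi, hrB⟩⟩
        · -- left_inv
          intro x hx
          rw [Finset.mem_product] at hx
          have hx1 := mem_SPs.mp hx.1
          have hx2 := mem_SPs.mp hx.2
          obtain ⟨hf1, hf2⟩ := concat_filter hx1.1 hx2.1
          rw [hf1, hf2, unshiftP_shiftP]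
        · -- right_inv
          intro E hE
          obtain ⟨hEpart, hABE, hED⟩ := mem_SPs.mp hE
          obtain ⟨hLo, hHi, hdec⟩ := split_partition hEpart ((refines_D_iff hEpart).mp hED)
          exact hdec.symm
        · -- values
          intro x hx
          rw [Finset.mem_product] at hx
          have hx1 := mem_SPs.mp hx.1
          have hx2 := mem_SPs.mp hx.2
          rw [hmul n k x.1 x.2 hx1.1 hx2.1, ← hD]
          rw [hfiber (concatP n x.1 x.2)]
          refine mem_SPs.mpr ⟨concat_partition hx1.1 hx2.1, ?_, ?_⟩
          · exact concat_refines_concat hx1.2 hx2.2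
          · exact (refines_D_iff (concat_partition hx1.1 hx2.1)).mpr
              (concat_dichotomy hx1.1 hx2.1)
    _ = ∑ C ∈ T, m (n + k) C := by
        apply Finset.sum_fiberwise_of_maps_to
        intro C hC
        obtain ⟨hCpart, hABC⟩ := mem_SPs.mp hC
        refine mem_SPs.mpr ⟨meetP_partition hCpart hDpart, ?_, meetP_refines_right⟩
        exact refines_meetP hABpart.1 hABC hABD
    _ = pfun m (n + k) (concatP n A B) := rfl

end NCSymAux
namespace NCSymAux

def mfun {R : Type*} [Ring R] (m : ℕ → Finset (Finset ℕ) → R) (i : SPIdx) : R := m i.1.1 i.1.2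

noncomputable def upSet (i : SPIdx) : Finset SPIdx :=
  (SPs i.1.1 (fun B => refines i.1.2 B)).attach.image
    (fun B => ⟨(i.1.1, B.1), (mem_SPs.mp B.2).1⟩)

lemma mem_upSet {i j : SPIdx} : j ∈ upSet i ↔ j.1.1 = i.1.1 ∧ refines i.1.2 j.1.2 := by
  constructor
  · intro h
    rcases Finset.mem_image.mp h with ⟨B, hB, rfl⟩
    exact ⟨rfl, (mem_SPs.mp B.2).2⟩
  · rintro ⟨h1, h2⟩
    have hmem : j.1.2 ∈ SPs i.1.1 (fun B => refines i.1.2 B) :=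
      mem_SPs.mpr ⟨h1 ▸ j.2, h2⟩
    refine Finset.mem_image.mpr ⟨⟨j.1.2, hmem⟩, Finset.mem_attach _ _, ?_⟩
    apply Subtype.ext
    exact Prod.ext h1.symm rfl

lemma upSet_self (i : SPIdx) : i ∈ upSet i := mem_upSet.mpr ⟨rfl, refines_refl _⟩

lemma upSet_subset {i j : SPIdx} (h : j ∈ upSet i) : upSet j ⊆ upSet i := by
  intro x hx
  rw [mem_upSet] at h hx ⊢
  exact ⟨hx.1.trans h.1, refines_trans h.2 hx.2⟩

lemma upSet_eq_of_mem {i j : SPIdx} (h : j ∈ upSet i) (h' : i ∈ upSet j) : i = j := by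
  rw [mem_upSet] at h h'
  apply Subtype.ext
  apply Prod.ext h'.1
  exact refines_antisymm i.2 j.2 h.2 h'.2

lemma upSet_card_lt {i j : SPIdx} (h : j ∈ upSet i) (hne : j ≠ i) :
    (upSet j).card < (upSet i).card := by
  apply Finset.card_lt_card
  rw [Finset.ssubset_iff_of_subset (upSet_subset h)]
  refine ⟨i, upSet_self i, fun hc => ?_⟩
  exact hne (upSet_eq_of_mem h hc).symm

lemma pfun_eq_sum_upSet {R : Type*} [Ring R] (m : ℕ → Finset (Finset ℕ) → R) (i : SPIdx) :
    pfun m i.1.1 i.1.2 = ∑ j ∈ upSet i, mfun m j := by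
  rw [upSet, Finset.sum_image]
  · rw [pfun, ← Finset.sum_attach]
    rfl
  · intro x _ y _ hxy
    apply Subtype.ext
    exact congrArg (fun s : SPIdx => s.1.2) hxy

section Basis

variable {R : Type*} [Ring R] [Algebra ℚ R] {m : ℕ → Finset (Finset ℕ) → R}

lemma pfun_span (hspan : Submodule.span ℚ (Set.range (mfun m)) = ⊤) :
    Submodule.span ℚ (Set.range fun i : SPIdx => pfun m i.1.1 i.1.2) = ⊤ := by
  rw [eq_top_iff, ← hspan, Submodule.span_le]
  rintro _ ⟨i, rfl⟩
  suffices H : ∀ N : ℕ, ∀ i : SPIdx, (upSet i).card ≤ N →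
      mfun m i ∈ Submodule.span ℚ (Set.range fun i : SPIdx => pfun m i.1.1 i.1.2) from
    H _ i le_rfl
  intro N
  induction N with
  | zero =>
    intro i hi
    exfalso
    have := Finset.card_pos.mpr ⟨i, upSet_self i⟩
    omega
  | succ N ihN =>
    intro i hi
    have key : mfun m i = pfun m i.1.1 i.1.2 - ∑ j ∈ (upSet i).erase i, mfun m j := by
      rw [pfun_eq_sum_upSet, ← Finset.add_sum_erase _ _ (upSet_self i)]
      abel
    rw [key]
    apply Submodule.sub_mem
    · exact Submodule.subset_span ⟨i, rfl⟩
    · apply Submodule.sum_mem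
      intro j hj
      rcases Finset.mem_erase.mp hj with ⟨hne, hmem⟩
      have := upSet_card_lt hmem hne
      exact ihN j (by omega)

lemma pfun_li (hli : LinearIndependent ℚ (mfun m)) :
    LinearIndependent ℚ (fun i : SPIdx => pfun m i.1.1 i.1.2) := by
  classical
  rw [linearIndependent_iff']
  intro s g hsum i₀ hi₀
  set t := s.biUnion upSet with ht
  have hsub : ∀ i ∈ s, ∀ j ∈ upSet i, j ∈ t :=
    fun i hi j hj => Finset.mem_biUnion.mpr ⟨i, hi, hj⟩
  have hexp : ∑ j ∈ t, (∑ i ∈ s.filter (fun i => j ∈ upSet i), g i) • mfun m j = 0 := by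
    have h1 : ∀ i ∈ s, g i • pfun m i.1.1 i.1.2 =
        ∑ j ∈ t, ite (j ∈ upSet i) (g i • mfun m j) 0 := by
      intro i hi
      rw [pfun_eq_sum_upSet, Finset.smul_sum, ← Finset.sum_filter]
      congr 1
      apply Finset.ext
      intro j
      rw [Finset.mem_filter]
      exact ⟨fun h => ⟨hsub i hi j h, h⟩, fun h => h.2⟩
    calc ∑ j ∈ t, (∑ i ∈ s.filter (fun i => j ∈ upSet i), g i) • mfun m j
        = ∑ j ∈ t, ∑ i ∈ s, ite (j ∈ upSet i) (g i • mfun m j) 0 := by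
          apply Finset.sum_congr rfl
          intro j _
          rw [Finset.sum_smul, Finset.sum_filter]
      _ = ∑ i ∈ s, ∑ j ∈ t, ite (j ∈ upSet i) (g i • mfun m j) 0 := Finset.sum_comm
      _ = ∑ i ∈ s, g i • pfun m i.1.1 i.1.2 := by
          apply Finset.sum_congr rfl
          intro i hi
          exact (h1 i hi).symm
      _ = 0 := hsum
  have hcoef := linearIndependent_iff'.mp hli t _ hexp
  suffices H : ∀ N : ℕ, ∀ i ∈ s,
      (s.filter fun i' => (upSet i).card < (upSet i').card).card = N → g i = 0 from
    H _ i₀ hi₀ rfl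
  intro N
  induction N using Nat.strong_induction_on with
  | _ N ihN =>
    intro i hi hN
    have hit : i ∈ t := hsub i hi i (upSet_self i)
    have h0 := hcoef i hit
    have hsingle : ∑ i' ∈ s.filter (fun i' => i ∈ upSet i'), g i' = g i := by
      apply Finset.sum_eq_single_of_mem
      · exact Finset.mem_filter.mpr ⟨hi, upSet_self i⟩
      · intro b hb hbne
        rcases Finset.mem_filter.mp hb with ⟨hbs, hbup⟩
        have hlt : (upSet i).card < (upSet b).card :=
          upSet_card_lt hbup (fun h => hbne (by rw [h]))
        have hss : (s.filter fun x => (upSet b).card < (upSet x).card) ⊂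
            (s.filter fun x => (upSet i).card < (upSet x).card) := by
          rw [Finset.ssubset_iff_of_subset]
          · exact ⟨b, Finset.mem_filter.mpr ⟨hbs, hlt⟩,
              fun hc => absurd (Finset.mem_filter.mp hc).2 (lt_irrefl _)⟩
          · intro x hx
            rcases Finset.mem_filter.mp hx with ⟨hxs, hxlt⟩
            exact Finset.mem_filter.mpr ⟨hxs, hlt.trans hxlt⟩
        have := Finset.card_lt_card hss
        exact ihN _ (by omega) b hbs rfl
    rw [hsingle] at h0
    exact h0

end Basis
end NCSymAux
namespace NCSymAux

lemma facP_isPartition (L : List AtomIdx) :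
    IsSetPartition (concatListP (L.map Subtype.val)).1 (concatListP (L.map Subtype.val)).2 :=
  concatListP_partition (by
    intro p hp
    rcases List.mem_map.mp hp with ⟨a, _, rfl⟩
    exact a.2)

noncomputable def facP (L : List AtomIdx) : SPIdx :=
  ⟨concatListP (L.map Subtype.val), facP_isPartition L⟩

lemma facP_injective : Function.Injective facP := by
  intro L L' h
  have h1 : concatListP (L.map Subtype.val) = concatListP (L'.map Subtype.val) :=
    congrArg Subtype.val h
  have h2 := factorization_unique _ _
    (fun p hp => by rcases List.mem_map.mp hp with ⟨a, _, rfl⟩; exact a.2)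
    (fun p hp => by rcases List.mem_map.mp hp with ⟨a, _, rfl⟩; exact a.2) h1
  exact List.map_injective_iff.mpr Subtype.val_injective h2

lemma facP_surjective : Function.Surjective facP := by
  intro i
  obtain ⟨L, hL, hcl⟩ := factorization_exists i.1.1 i.1.2 i.2
  refine ⟨L.attach.map (fun p => ⟨p.1, hL p.1 p.2⟩), ?_⟩
  apply Subtype.ext
  show concatListP ((L.attach.map (fun p => (⟨p.1, hL p.1 p.2⟩ : AtomIdx))).map Subtype.val) = i.1
  rw [List.map_map]
  have h1 : (Subtype.val ∘ fun p : {x // x ∈ L} => (⟨p.1, hL p.1 p.2⟩ : AtomIdx)) =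
      fun p : {x // x ∈ L} => p.1 := rfl
  rw [h1, List.attach_map_subtype_val, hcl]

noncomputable def facEquiv : FreeMonoid AtomIdx ≃ SPIdx :=
  Equiv.ofBijective (fun w => facP (FreeMonoid.toList w))
    ⟨fun w w' h => FreeMonoid.toList.injective (facP_injective h),
     fun i => by
      obtain ⟨L, hL⟩ := facP_surjective i
      exact ⟨FreeMonoid.ofList L, hL⟩⟩

lemma facEquiv_apply (w : FreeMonoid AtomIdx) : facEquiv w = facP (FreeMonoid.toList w) := rfl

lemma basisFreeMonoid_apply (w : FreeMonoid AtomIdx) :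
    FreeAlgebra.basisFreeMonoid ℚ AtomIdx w =
      ((FreeMonoid.toList w).map (FreeAlgebra.ι ℚ)).prod := by
  rw [FreeAlgebra.basisFreeMonoid, Module.Basis.map_apply, Finsupp.coe_basisSingleOne]
  show (FreeAlgebra.equivMonoidAlgebraFreeMonoid (R := ℚ) (X := AtomIdx)).symm
    (MonoidAlgebra.single w (1 : ℚ)) = _
  rw [FreeAlgebra.equivMonoidAlgebraFreeMonoid, AlgEquiv.ofAlgHom_symm_apply]
  show MonoidAlgebra.lift ℚ _ (FreeMonoid AtomIdx)
    (FreeMonoid.lift (FreeAlgebra.ι ℚ)) (MonoidAlgebra.single w 1) = _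
  rw [MonoidAlgebra.lift_single, FreeMonoid.lift_apply]
  simp

section Final

variable {R : Type*} [Ring R] [Algebra ℚ R] {m : ℕ → Finset (Finset ℕ) → R}

noncomputable def pBasis (hli : LinearIndependent ℚ (mfun m))
    (hspan : Submodule.span ℚ (Set.range (mfun m)) = ⊤) : Module.Basis SPIdx ℚ R :=
  Module.Basis.mk (pfun_li hli) (pfun_span hspan).ge

lemma pBasis_apply (hli : LinearIndependent ℚ (mfun m))
    (hspan : Submodule.span ℚ (Set.range (mfun m)) = ⊤) (i : SPIdx) :
    pBasis hli hspan i = pfun m i.1.1 i.1.2 := Module.Basis.mk_apply _ _ _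

end Final
end NCSymAux
/-- `NCSym` (any algebra with basis `m_A` indexed by set partitions satisfying
the monomial product rule) is freely generated, as a (noncommutative) algebra, by the
power sums `p_A = ∑_{B ≥ A} m_B` with `A` atomic. -/
theorem ncsym_free {R : Type*} [Ring R] [Algebra ℚ R]
    (m : ℕ → Finset (Finset ℕ) → R)
    (hone : m 0 ∅ = 1)
    (hmul : ∀ n k A B, IsSetPartition n A → IsSetPartition k B →
      m n A * m k B =
        ∑ C ∈ SPs (n + k)
            (fun C => meetP C (concatP n (onePartP n) (onePartP k)) = concatP n A B),
          m (n + k) C)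
    (hli : LinearIndependent ℚ (fun i : SPIdx => m i.1.1 i.1.2))
    (hspan : Submodule.span ℚ (Set.range fun i : SPIdx => m i.1.1 i.1.2) = ⊤) :
    Function.Bijective
      ⇑(FreeAlgebra.lift ℚ
        (fun a : AtomIdx => ∑ B ∈ SPs a.1.1 (fun B => refines a.1.2 B), m a.1.1 B) :
          FreeAlgebra ℚ AtomIdx →ₐ[ℚ] R) := by
  classical
  open NCSymAux in
  set F := (FreeAlgebra.lift ℚ
      (fun a : AtomIdx => ∑ B ∈ SPs a.1.1 (fun B => refines a.1.2 B), m a.1.1 B) :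
        FreeAlgebra ℚ AtomIdx →ₐ[ℚ] R) with hF
  have hml : LinearIndependent ℚ (NCSymAux.mfun m) := hli
  have hms : Submodule.span ℚ (Set.range (NCSymAux.mfun m)) = ⊤ := hspan
  have key : ∀ L : List AtomIdx, F ((L.map (FreeAlgebra.ι ℚ)).prod) =
      NCSymAux.pfun m (NCSymAux.facP L).1.1 (NCSymAux.facP L).1.2 := by
    intro L
    induction L with
    | nil =>
      simp only [List.map_nil, List.prod_nil, map_one]
      rw [show (NCSymAux.facP ([] : List AtomIdx)).1.1 = 0 from rfl,
        show (NCSymAux.facP ([] : List AtomIdx)).1.2 = (∅ : Finset (Finset ℕ)) from rfl,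
        NCSymAux.pfun_zero, hone]
    | cons a L ih =>
      rw [List.map_cons, List.prod_cons, map_mul, FreeAlgebra.lift_ι_apply, ih]
      have hgen : (∑ B ∈ SPs a.1.1 (fun B => refines a.1.2 B), m a.1.1 B)
          = NCSymAux.pfun m a.1.1 a.1.2 := rfl
      rw [hgen, NCSymAux.pfun_mul m hmul a.2.1 (NCSymAux.facP L).2]
      have h1 : (NCSymAux.facP (a :: L)).1.1 = a.1.1 + (NCSymAux.facP L).1.1 :=
        Nat.add_comm _ _
      rw [h1]
      rfl
  have hbasis : ∀ w : FreeMonoid AtomIdx,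
      F (FreeAlgebra.basisFreeMonoid ℚ AtomIdx w) =
        NCSymAux.pBasis hml hms (NCSymAux.facEquiv w) := by
    intro w
    rw [NCSymAux.basisFreeMonoid_apply, key, NCSymAux.pBasis_apply]
    rfl
  have heq : F.toLinearMap =
      ((FreeAlgebra.basisFreeMonoid ℚ AtomIdx).equiv (NCSymAux.pBasis hml hms)
        NCSymAux.facEquiv).toLinearMap := by
    apply (FreeAlgebra.basisFreeMonoid ℚ AtomIdx).ext
    intro w
    rw [AlgHom.toLinearMap_apply, LinearEquiv.coe_toLinearMap, Module.Basis.equiv_apply]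
    exact hbasis w
  have hco : ⇑F = ⇑((FreeAlgebra.basisFreeMonoid ℚ AtomIdx).equiv (NCSymAux.pBasis hml hms)
      NCSymAux.facEquiv) := by
    have := congrArg (fun f : FreeAlgebra ℚ AtomIdx →ₗ[ℚ] R => ⇑f) heq
    simpa using this
  rw [hco]
  exact LinearEquiv.bijective _

end
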